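/- arXiv:1309.0687 — 4 statements merged into one kernel-verified Lean document; each statement's English description precedes it below -/
import Mathlib

section
/- Fix the root pitch class 0 in ZMod 12. The admissible modal scales over a minor-seventh base-chord {0, 3, 7, 10} are exactly the sets {0, s1, 3, s3, 7, s5, 10} ⊆ ZMod 12 with s1 ∈ {1, 2}, s3 ∈ {5, 6}, s5 ∈ {8, 9}; there are exactly 8 such scales, and exactly 3 of them are not among the five standard modes Dorian {0,2,3,5,7,9,10}, Phrygian {0,1,3,5,7,8,10}, Eolian {0,2,3,5,7,8,10}, Dorian ♭2 {0,1,3,5,7,9,10} and Dorian ♯4 {0,2,3,6,7,9,10}: the special modes are the three scales {0,1,3,6,7,8,10}, {0,1,3,6,7,9,10} and {0,2,3,6,7,8,10}. -/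
/-- The admissible modal scales over the minor-seventh base-chord {0, 3, 7, 10}
rooted at 0: the sets {0, s1, 3, s3, 7, s5, 10} with s1 ∈ {1, 2}, s3 ∈ {5, 6},
s5 ∈ {8, 9}. -/
def min7Adm : Finset (Finset (ZMod 12)) :=
  ({1, 2} : Finset (ZMod 12)).biUnion fun s1 =>
    ({5, 6} : Finset (ZMod 12)).biUnion fun s3 =>
      ({8, 9} : Finset (ZMod 12)).image fun s5 =>
        ({0, s1, 3, s3, 7, s5, 10} : Finset (ZMod 12))

/-- The five standard modes over a minor-seventh chord: Dorian, Phrygian, Eolian,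
Dorian ♭2 and Dorian ♯4. -/
def min7Standard : Finset (Finset (ZMod 12)) :=
  { ({0, 2, 3, 5, 7, 9, 10} : Finset (ZMod 12)),
    ({0, 1, 3, 5, 7, 8, 10} : Finset (ZMod 12)),
    ({0, 2, 3, 5, 7, 8, 10} : Finset (ZMod 12)),
    ({0, 1, 3, 5, 7, 9, 10} : Finset (ZMod 12)),
    ({0, 2, 3, 6, 7, 9, 10} : Finset (ZMod 12)) }

/-- The admissible modal scales over the minor-seventh base-chord {0,3,7,10} are
exactly the sets {0, s1, 3, s3, 7, s5, 10} with s1 ∈ {1,2}, s3 ∈ {5,6}, s5 ∈ {8,9};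
each is a 7-element set containing the base-chord; there are exactly 8 of them, and
exactly 3 are not standard modes: the special modes {0,1,3,6,7,8,10},
{0,1,3,6,7,9,10} and {0,2,3,6,7,8,10}. -/
theorem min7_special_modes :
    (∀ S : Finset (ZMod 12),
      S ∈ min7Adm ↔ ∃ s1 ∈ ({1, 2} : Finset (ZMod 12)),
        ∃ s3 ∈ ({5, 6} : Finset (ZMod 12)), ∃ s5 ∈ ({8, 9} : Finset (ZMod 12)),
          S = ({0, s1, 3, s3, 7, s5, 10} : Finset (ZMod 12))) ∧
    (∀ S ∈ min7Adm, ({0, 3, 7, 10} : Finset (ZMod 12)) ⊆ S ∧ S.card = 7) ∧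
    min7Adm.card = 8 ∧
    (min7Adm.filter fun S => S ∉ min7Standard).card = 3 ∧
    (min7Adm.filter fun S => S ∉ min7Standard) =
      { ({0, 1, 3, 6, 7, 8, 10} : Finset (ZMod 12)),
        ({0, 1, 3, 6, 7, 9, 10} : Finset (ZMod 12)),
        ({0, 2, 3, 6, 7, 8, 10} : Finset (ZMod 12)) } := by
  refine ⟨fun S => by simp [min7Adm]; tauto, fun S hS => ?_, by decide, by decide, by decide⟩
  fin_cases hS <;> exact ⟨by decide, by decide⟩
end

section
/- The graph Γ_maj7 associated to the major-seventh base-chord, namely the simple graph on Fin 9 with vertex labels (0 = I, 1 = aII, 2 = MII, 3 = MIII, 4 = aIV, 5 = PIV, 6 = PV, 7 = MVI, 8 = MVII) and edge set {0,1}, {0,2}, {1,3}, {2,3}, {3,4}, {3,5}, {4,6}, {5,6}, {6,7}, {7,8}, is connected and has exactly 10 edges; hence its first Betti number (edges − vertices + 1) equals 2, so τ(maj7) = 2 and the fundamental group of its realization is free on two generators. -/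
/-- Edge list of the graph Γ_maj7 on `Fin 9`, with vertex labels
0 = I, 1 = aII, 2 = MII, 3 = MIII, 4 = aIV, 5 = PIV, 6 = PV, 7 = MVI, 8 = MVII. -/
def maj7Edges : List (Fin 9 × Fin 9) :=
  [(0, 1), (0, 2), (1, 3), (2, 3), (3, 4), (3, 5), (4, 6), (5, 6), (6, 7), (7, 8)]

/-- The graph Γ_maj7 associated to the major-seventh base-chord. -/
def gammaMaj7 : SimpleGraph (Fin 9) :=
  SimpleGraph.fromRel fun i j => (i, j) ∈ maj7Edges

instance : DecidableRel gammaMaj7.Adj := fun i j =>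
  decidable_of_iff (i ≠ j ∧ ((i, j) ∈ maj7Edges ∨ (j, i) ∈ maj7Edges)) Iff.rfl

/-- Γ_maj7 is connected and has exactly 10 edges on its 9 vertices, so its first
Betti number (edges − vertices + 1) equals 2: τ(maj7) = 2 and the fundamental
group of its realization is free on two generators. -/
theorem gammaMaj7_betti_two :
    gammaMaj7.Connected ∧
    gammaMaj7.edgeFinset.card = 10 ∧
    (gammaMaj7.edgeFinset.card : ℤ) - (Fintype.card (Fin 9) : ℤ) + 1 = 2 := by
  refine ⟨(gammaMaj7.connected_iff).2 ⟨by decide, ⟨0⟩⟩, by decide, by decide⟩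
end

section
/- The graph Γ_7 associated to the dominant-seventh base-chord, namely the simple graph on Fin 10 with vertex labels (0 = I, 1 = mII, 2 = MII, 3 = MIII, 4 = aIV, 5 = PIV, 6 = PV, 7 = mVI, 8 = MVI, 9 = mVII) and edge set {0,1}, {0,2}, {1,3}, {2,3}, {3,4}, {3,5}, {4,6}, {5,6}, {6,7}, {6,8}, {7,9}, {8,9}, is connected and has exactly 12 edges; hence its first Betti number (edges − vertices + 1) equals 3, so τ(7) = 3 and the fundamental group of its realization is free on three generators. The graphs Γ_−7 and Γ_−7♭5 have the same underlying structure (they are isomorphic to Γ_7 as abstract graphs), so likewise τ(−7) = τ(−7♭5) = 3. -/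
/-- Edge list of the graph Γ_7 on `Fin 10`, with vertex labels 0 = I, 1 = mII,
2 = MII, 3 = MIII, 4 = aIV, 5 = PIV, 6 = PV, 7 = mVI, 8 = MVI, 9 = mVII. -/
def dom7Edges : List (Fin 10 × Fin 10) :=
  [(0, 1), (0, 2), (1, 3), (2, 3), (3, 4), (3, 5), (4, 6), (5, 6),
   (6, 7), (6, 8), (7, 9), (8, 9)]

/-- The graph Γ_7 associated to the dominant-seventh base-chord. -/
def gammaDom7 : SimpleGraph (Fin 10) :=
  SimpleGraph.fromRel fun i j => (i, j) ∈ dom7Edges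

/-- The graph Γ_−7 associated to the minor-seventh base-chord (same underlying
structure as Γ_7, with vertex 3 = mIII). -/
def gammaMin7 : SimpleGraph (Fin 10) :=
  SimpleGraph.fromRel fun i j => (i, j) ∈ dom7Edges

/-- The graph Γ_−7♭5 associated to the half-diminished base-chord (same underlying
structure as Γ_7, with vertex labels 3 = mIII, 4 = dIV, 6 = dV). -/
def gammaHalfDim : SimpleGraph (Fin 10) :=
  SimpleGraph.fromRel fun i j => (i, j) ∈ dom7Edges

instance : DecidableRel gammaDom7.Adj := fun i j =>
  decidable_of_iff (i ≠ j ∧ ((i, j) ∈ dom7Edges ∨ (j, i) ∈ dom7Edges)) Iff.rfl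

instance : DecidableRel gammaMin7.Adj := fun i j =>
  decidable_of_iff (i ≠ j ∧ ((i, j) ∈ dom7Edges ∨ (j, i) ∈ dom7Edges)) Iff.rfl

instance : DecidableRel gammaHalfDim.Adj := fun i j =>
  decidable_of_iff (i ≠ j ∧ ((i, j) ∈ dom7Edges ∨ (j, i) ∈ dom7Edges)) Iff.rfl

lemma gammaDom7_connected : gammaDom7.Connected := by
  rw [SimpleGraph.connected_iff_exists_forall_reachable]
  refine ⟨0, fun v => ?_⟩
  have r1 : gammaDom7.Reachable 0 1 := (show gammaDom7.Adj 0 1 by decide).reachable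
  have r2 : gammaDom7.Reachable 0 2 := (show gammaDom7.Adj 0 2 by decide).reachable
  have r3 : gammaDom7.Reachable 0 3 :=
    r1.trans (show gammaDom7.Adj 1 3 by decide).reachable
  have r4 : gammaDom7.Reachable 0 4 :=
    r3.trans (show gammaDom7.Adj 3 4 by decide).reachable
  have r5 : gammaDom7.Reachable 0 5 :=
    r3.trans (show gammaDom7.Adj 3 5 by decide).reachable
  have r6 : gammaDom7.Reachable 0 6 :=
    r4.trans (show gammaDom7.Adj 4 6 by decide).reachable
  have r7 : gammaDom7.Reachable 0 7 :=
    r6.trans (show gammaDom7.Adj 6 7 by decide).reachable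
  have r8 : gammaDom7.Reachable 0 8 :=
    r6.trans (show gammaDom7.Adj 6 8 by decide).reachable
  have r9 : gammaDom7.Reachable 0 9 :=
    r7.trans (show gammaDom7.Adj 7 9 by decide).reachable
  fin_cases v
  exacts [SimpleGraph.Reachable.refl 0, r1, r2, r3, r4, r5, r6, r7, r8, r9]


/-- Γ_7 is connected and has exactly 12 edges on its 10 vertices, so its first
Betti number (edges − vertices + 1) equals 3: τ(7) = 3 and the fundamental group
of its realization is free on three generators. The graphs Γ_−7 and Γ_−7♭5 are
isomorphic to Γ_7 as abstract graphs, so likewise they are connected with 12 edges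
and Betti number 3, i.e. τ(−7) = τ(−7♭5) = 3. -/
theorem gammaDom7_betti_three :
    gammaDom7.Connected ∧
    gammaDom7.edgeFinset.card = 12 ∧
    (gammaDom7.edgeFinset.card : ℤ) - (Fintype.card (Fin 10) : ℤ) + 1 = 3 ∧
    Nonempty (gammaDom7 ≃g gammaMin7) ∧
    Nonempty (gammaDom7 ≃g gammaHalfDim) ∧
    gammaMin7.Connected ∧
    gammaMin7.edgeFinset.card = 12 ∧
    (gammaMin7.edgeFinset.card : ℤ) - (Fintype.card (Fin 10) : ℤ) + 1 = 3 ∧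
    gammaHalfDim.Connected ∧
    gammaHalfDim.edgeFinset.card = 12 ∧
    (gammaHalfDim.edgeFinset.card : ℤ) - (Fintype.card (Fin 10) : ℤ) + 1 = 3 := by
  refine ⟨gammaDom7_connected, by decide, by decide,
    ⟨⟨Equiv.refl _, Iff.rfl⟩⟩, ⟨⟨Equiv.refl _, Iff.rfl⟩⟩,
    gammaDom7_connected, by decide, by decide,
    gammaDom7_connected, by decide, by decide⟩
end

section
/- Let X be a topological space and A ⊆ X a subspace such that the pair (X, A) has the homotopy extension property (every continuous map X → Y together with a homotopy of its restriction to A extends to a homotopy of the map on all of X, for every space Y). If A is contractible (the inclusion-induced identity of A is homotopic to a constant map within A), then the quotient map q : X → X/A, collapsing A to a point, is a homotopy equivalence. -/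
open unitInterval

/-- The setoid on `X` identifying all points of `A` to a single point (and nothing
else); its quotient is the space `X/A`. -/
def collapseSetoid {X : Type*} (A : Set X) : Setoid X where
  r x y := x = y ∨ (x ∈ A ∧ y ∈ A)
  iseqv := by
    constructor
    · intro x; exact Or.inl rfl
    · intro x y h
      rcases h with rfl | h
      · exact Or.inl rfl
      · exact Or.inr ⟨h.2, h.1⟩
    · intro x y z hxy hyz
      rcases hxy with rfl | hxy
      · exact hyz
      · rcases hyz with rfl | hyz
        · exact Or.inr hxy
        · exact Or.inr ⟨hxy.1, hyz.2⟩

/-- The pair `(X, A)` has the homotopy extension property: for every space `Y`,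
every continuous map `f : X → Y` and every homotopy `H : A × I → Y` of the
restriction of `f` to `A` (i.e. with `H (a, 0) = f a`), there is a homotopy
`G : X × I → Y` extending `H` and starting at `f`. -/
def HasHEP (X : Type*) [TopologicalSpace X] (A : Set X) : Prop :=
  ∀ (Y : Type) [TopologicalSpace Y] (f : C(X, Y)) (H : C(A × I, Y)),
    (∀ a : A, H (a, 0) = f a) →
      ∃ G : C(X × I, Y),
        (∀ x : X, G (x, 0) = f x) ∧ ∀ (a : A) (t : I), G ((a : X), t) = H (a, t)

/-- If the pair `(X, A)` has the homotopy extension property and `A` is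
contractible, then the quotient map `q : X → X/A`, collapsing `A` to a point, is a
homotopy equivalence. -/
theorem quotient_map_homotopyEquiv_of_hep_of_contractible
    {X : Type} [TopologicalSpace X] (A : Set X)
    (hep : HasHEP X A) (hA : ContractibleSpace A) :
    ∃ h : ContinuousMap.HomotopyEquiv X (Quotient (collapseSetoid A)),
      ⇑h.toFun = Quotient.mk (collapseSetoid A) := by
  classical
  obtain ⟨a₀, ⟨HA⟩⟩ := (contractible_iff_id_nullhomotopic A).mp hA
  -- homotopy of the inclusion contracting A inside X
  let H : C(A × I, X) := ⟨fun p => ((HA (p.2, p.1) : A) : X), by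
    apply continuous_subtype_val.comp
    exact HA.continuous.comp (by continuity)⟩
  have hH0 : ∀ a : A, H (a, 0) = (ContinuousMap.id X) a := fun a => by
    simp only [H, ContinuousMap.coe_mk, ContinuousMap.id_apply]
    rw [HA.apply_zero]; rfl
  obtain ⟨G, hG0, hGA⟩ := hep X (ContinuousMap.id X) H hH0
  -- G(·,1) is constant (= a₀) on A
  have hmem : ∀ (a : A) (t : I), G ((a : X), t) ∈ A := fun a t => by
    rw [hGA]; exact (HA (t, a)).2
  have hG1A : ∀ (a : A), G ((a : X), 1) = (a₀ : X) := fun a => by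
    rw [hGA]
    simp only [H, ContinuousMap.coe_mk]
    rw [HA.apply_one]; rfl
  set s := collapseSetoid A
  have hq : Topology.IsQuotientMap (Quotient.mk s) := isQuotientMap_quot_mk
  let q : C(X, Quotient s) := ⟨Quotient.mk s, hq.continuous⟩
  -- the inverse map k : X/A → X
  have hres : ∀ x y : X, x ≈ y → G (x, 1) = G (y, 1) := by
    intro x y hxy
    rcases hxy with rfl | ⟨hx, hy⟩
    · rfl
    · rw [hG1A ⟨x, hx⟩, hG1A ⟨y, hy⟩]
  let k : C(Quotient s, X) :=
    ⟨Quotient.lift (fun x => G (x, 1)) hres,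
      Continuous.quotient_lift (G.continuous.comp (by continuity)) hres⟩
  -- left homotopy : id X ≃ k ∘ q, via G
  have hL : (k.comp q).Homotopic (ContinuousMap.id X) := by
    refine (ContinuousMap.Homotopic.symm ⟨?_⟩)
    exact
      { toContinuousMap := ⟨fun p => G (p.2, p.1), G.continuous.comp (by continuity)⟩
        map_zero_left := fun x => hG0 x
        map_one_left := fun x => rfl }
  -- right homotopy, from the descended homotopy on X/A
  have hrest : ∀ t : I, ∀ x y : X, x ≈ y →
      Quotient.mk s (G (x, t)) = Quotient.mk s (G (y, t)) := by
    intro t x y hxy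
    rcases hxy with rfl | ⟨hx, hy⟩
    · rfl
    · apply Quotient.sound
      exact Or.inr ⟨hmem ⟨x, hx⟩ t, hmem ⟨y, hy⟩ t⟩
  let Gbar : Quotient s × I → Quotient s := fun p =>
    Quotient.lift (fun x => Quotient.mk s (G (x, p.2))) (hrest p.2) p.1
  have hGbarCont : Continuous Gbar := by
    apply hq.continuous_lift_prod_left
    exact hq.continuous.comp (G.continuous)
  have hR : (q.comp k).Homotopic (ContinuousMap.id (Quotient s)) := by
    refine (ContinuousMap.Homotopic.symm ⟨?_⟩)
    exact
      { toContinuousMap := ⟨fun p => Gbar (p.2, p.1), hGbarCont.comp (by continuity)⟩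
        map_zero_left := fun y => by
          induction y using Quotient.ind with
          | _ x => show Quotient.mk s (G (x, 0)) = Quotient.mk s x
                   rw [hG0]; rfl
        map_one_left := fun y => by
          induction y using Quotient.ind with
          | _ x => rfl }
  exact ⟨⟨q, k, hL, hR⟩, rfl⟩
end
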